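/- arXiv:2004.02576 — 3 statements merged into one kernel-verified Lean document; each statement's English description precedes it below -/
import Mathlib

section
/- For every real numbers $s$, $t$ and every $p > 1$, if $T_k(x) = x + k$ for $x \le -k$, $T_k(x) = 0$ for $-k < x < k$, and $T_k(x) = x - k$ for $x \ge k$ (with $k > 0$), then $|s-t|^{p-2}(s-t)(T_k(s)-T_k(t)) \ge |T_k(s)-T_k(t)|^{p}$. -/
theorem truncation_inequality (p k s t : ℝ) (hp : 1 < p) (hk : 0 < k)
    (T : ℝ → ℝ)
    (hT : ∀ x : ℝ, T x = if x ≤ -k then x + k else if x < k then 0 else x - k) :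
    |T s - T t| ^ p ≤ |s - t| ^ (p - 2) * (s - t) * (T s - T t) := by
  have key : ∀ x y : ℝ, x ≤ y → T x ≤ T y ∧ T y - T x ≤ y - x := by
    intro x y hxy
    rw [hT, hT]
    split_ifs with h1 h2 h3 h4 <;> (try push_neg at *) <;> constructor <;> linarith
  have hsign : 0 ≤ (s - t) * (T s - T t) := by
    rcases le_total s t with h | h
    · obtain ⟨h1, _⟩ := key s t h
      nlinarith
    · obtain ⟨h1, _⟩ := key t s h
      nlinarith
  have hlip : |T s - T t| ≤ |s - t| := by
    rcases le_total s t with h | h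
    · obtain ⟨h1, h2⟩ := key s t h
      rw [abs_sub_comm, abs_sub_comm s t, abs_of_nonneg (by linarith),
        abs_of_nonneg (by linarith)]
      exact h2
    · obtain ⟨h1, h2⟩ := key t s h
      rw [abs_of_nonneg (by linarith), abs_of_nonneg (by linarith)]
      exact h2
  have hprod : (s - t) * (T s - T t) = |s - t| * |T s - T t| := by
    rw [← abs_mul, abs_of_nonneg hsign]
  set a := |s - t| with ha
  set b := |T s - T t| with hb
  have ha0 : 0 ≤ a := abs_nonneg _
  have hb0 : 0 ≤ b := abs_nonneg _
  rw [mul_assoc, hprod, ← mul_assoc]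
  rcases eq_or_lt_of_le hb0 with hbz | hbpos
  · rw [← hbz, Real.zero_rpow (by linarith), mul_zero]
  · have hapos : 0 < a := lt_of_lt_of_le hbpos hlip
    have : a ^ (p - 2) * a = a ^ (p - 1) := by
      rw [← Real.rpow_add_one (ne_of_gt hapos)]
      ring_nf
    rw [this]
    calc b ^ p = b ^ (p - 1) * b := by
          rw [← Real.rpow_add_one (ne_of_gt hbpos)]; ring_nf
      _ ≤ a ^ (p - 1) * b :=
          mul_le_mul_of_nonneg_right (Real.rpow_le_rpow hb0 hlip (by linarith)) hb0
end

section
/- For all real numbers $x, y$ and every $p > 1$, writing $u^- = \min(u,0)$, it holds that $|x^- - y^-|^p \le |x-y|^{p-2}(x-y)(x^- - y^-)$. -/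
theorem neg_part_inequality (p x y : ℝ) (hp : 1 < p) :
    |min x 0 - min y 0| ^ p ≤ |x - y| ^ (p - 2) * (x - y) * (min x 0 - min y 0) := by
  set a := min x 0 with ha
  set b := min y 0 with hb
  have h1 : |a - b| ≤ |x - y| := by
    have := abs_min_sub_min_le_max x 0 y 0
    simpa using this
  have hsign : 0 ≤ (x - y) * (a - b) := by
    rcases le_total x y with h | h
    · have hab : a ≤ b := min_le_min h le_rfl
      nlinarith [mul_nonneg (by linarith : (0:ℝ) ≤ y - x) (by linarith : (0:ℝ) ≤ b - a)]
    · have hab : b ≤ a := min_le_min h le_rfl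
      exact mul_nonneg (by linarith) (by linarith)
  have hprod : (x - y) * (a - b) = |x - y| * |a - b| := by
    rw [← abs_mul, abs_of_nonneg hsign]
  by_cases hab : a = b
  · rw [hab]
    simp only [sub_self, abs_zero, mul_zero]
    rw [Real.zero_rpow (by positivity)]
  · have habs : 0 < |a - b| := abs_pos.mpr (sub_ne_zero.mpr hab)
    have hxy : 0 < |x - y| := lt_of_lt_of_le habs h1
    calc |a - b| ^ p = |a - b| ^ (p - 1) * |a - b| := by
          rw [show p = (p-1)+1 by ring, Real.rpow_add habs, Real.rpow_one]; ring_nf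
      _ ≤ |x - y| ^ (p - 1) * |a - b| := by
          exact mul_le_mul_of_nonneg_right
            (Real.rpow_le_rpow (abs_nonneg _) h1 (by linarith)) (abs_nonneg _)
      _ = |x - y| ^ (p - 2) * (|x - y| * |a - b|) := by
          rw [show p - 1 = (p-2)+1 by ring, Real.rpow_add hxy, Real.rpow_one]; ring
      _ = |x - y| ^ (p - 2) * (x - y) * (a - b) := by
          rw [← hprod]; ring
end

section
/- Let $p > 1$, $k > 1$ and $p - 1 < \tau < p$. Then there exists a constant $C = C(k, \tau, p) > 0$ such that for all real numbers $a, b$: $|a+b|^p \le k|a|^p + |b|^p + C|a|^{p-\tau}|b|^{\tau}$. -/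
-- Mean-value type inequality: (x+y)^p ≤ y^p + p (x+y)^(p-1) x for x,y ≥ 0, p ≥ 1.
lemma aux_mvt {x y p : ℝ} (hx : 0 ≤ x) (hy : 0 ≤ y) (hp : 1 ≤ p) :
    (x + y) ^ p ≤ y ^ p + p * (x + y) ^ (p - 1) * x := by
  rcases eq_or_lt_of_le (by linarith : (0:ℝ) ≤ x + y) with hz | hz
  · rw [← hz]
    have hx0 : x = 0 := by linarith
    have hy0 : y = 0 := by linarith
    simp [hx0, hy0, Real.zero_rpow (by linarith : p ≠ 0)]
  · set z := x + y with hzdef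
    have hzne : z ≠ 0 := hz.ne'
    have hs : (-1 : ℝ) ≤ y / z - 1 := by
      have : 0 ≤ y / z := div_nonneg hy hz.le
      linarith
    have hb := one_add_mul_self_le_rpow_one_add hs hp
    have h1 : 1 + (y / z - 1) = y / z := by ring
    rw [h1] at hb
    rw [Real.div_rpow hy hz.le p] at hb
    have hzp : 0 < z ^ p := Real.rpow_pos_of_pos hz p
    have hb2 : (1 + p * (y / z - 1)) * z ^ p ≤ y ^ p := (le_div_iff₀ hzp).1 hb
    have hzz : z ^ p = z ^ (p - 1) * z := by
      rw [← Real.rpow_add_one hzne (p - 1)]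
      congr 1; ring
    have hfrac : y / z - 1 = -x / z := by
      rw [hzdef]; field_simp
      rw [div_sub_one (by rw [← hzdef]; exact hzne), ← neg_div]; ring
    have hexp : (1 + p * (y / z - 1)) * z ^ p = z ^ p - p * (z ^ (p-1)) * x := by
      rw [hfrac]
      rw [hzz]
      field_simp
      ring
    rw [hexp] at hb2
    linarith

theorem power_sum_estimate (p k τ : ℝ) (hp : 1 < p) (hk : 1 < k)
    (hτ1 : p - 1 < τ) (hτ2 : τ < p) :
    ∃ C : ℝ, 0 < C ∧ ∀ a b : ℝ,
      |a + b| ^ p ≤ k * |a| ^ p + |b| ^ p + C * |a| ^ (p - τ) * |b| ^ τ := by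
  have hk0 : (0:ℝ) < k := by linarith
  have h1p : 1 < k ^ (1/p) :=
    (Real.one_lt_rpow_iff_of_pos hk0).2 (Or.inl ⟨hk, by positivity⟩)
  set δ : ℝ := k ^ (1/p) - 1 with hδdef
  have hδ : 0 < δ := by rw [hδdef]; linarith
  set C : ℝ := p * (1 + 1/δ) ^ (p-1) * δ ^ (p-1-τ) with hCdef
  have hC : 0 < C := by
    have h1 : 0 < (1 + 1/δ) ^ (p-1) := Real.rpow_pos_of_pos (by positivity) _
    have h2 : 0 < δ ^ (p-1-τ) := Real.rpow_pos_of_pos hδ _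
    positivity
  refine ⟨C, hC, ?_⟩
  intro a b
  set x := |a| with hxdef
  set y := |b| with hydef
  have hx : 0 ≤ x := abs_nonneg a
  have hy : 0 ≤ y := abs_nonneg b
  have h1 : |a + b| ^ p ≤ (x + y) ^ p :=
    Real.rpow_le_rpow (abs_nonneg _) (abs_add_le a b) (by linarith)
  have hCt : 0 ≤ C * x ^ (p - τ) * y ^ τ := by
    have := Real.rpow_nonneg hx (p - τ)
    have := Real.rpow_nonneg hy τ
    positivity
  rcases eq_or_lt_of_le hx with hx0 | hx0
  · -- x = 0
    have hx0' : x = 0 := hx0.symm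
    have : (x + y) ^ p = y ^ p := by rw [hx0', zero_add]
    have hkx : 0 ≤ k * x ^ p := by
      have := Real.rpow_nonneg hx p
      positivity
    linarith
  rcases le_or_gt y (δ * x) with hcase | hcase
  · -- small y: (x+y)^p ≤ ((1+δ)x)^p = k x^p
    have h2 : (x + y) ^ p ≤ ((1 + δ) * x) ^ p :=
      Real.rpow_le_rpow (by linarith) (by linarith) (by linarith)
    have h3 : ((1 + δ) * x) ^ p = k * x ^ p := by
      rw [Real.mul_rpow (by linarith) hx]
      congr 1
      have h1δ : (1 : ℝ) + δ = k ^ (1/p) := by rw [hδdef]; ring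
      rw [h1δ, ← Real.rpow_mul hk0.le, one_div,
        inv_mul_cancel₀ (by linarith : p ≠ 0), Real.rpow_one]
    have hyp : 0 ≤ y ^ p := Real.rpow_nonneg hy p
    linarith
  · -- large y: δ x < y
    have hy0 : 0 < y := lt_of_le_of_lt (by positivity) hcase
    have hxy : x ≤ (1/δ) * y := by
      rw [div_mul_eq_mul_div, le_div_iff₀ hδ]
      linarith [hcase]
    have hmvt := aux_mvt hx hy hp.le
    have hb1 : (x + y) ^ (p-1) ≤ ((1 + 1/δ) * y) ^ (p-1) :=
      Real.rpow_le_rpow (by linarith) (by nlinarith) (by linarith)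
    have hb2 : ((1 + 1/δ) * y) ^ (p-1) = (1 + 1/δ) ^ (p-1) * y ^ (p-1) :=
      Real.mul_rpow (by positivity) hy
    have hxsplit : x = x ^ (p - τ) * x ^ (τ - p + 1) := by
      rw [← Real.rpow_add hx0, show p - τ + (τ - p + 1) = 1 by ring, Real.rpow_one]
    have hxb : x ^ (τ - p + 1) ≤ ((1/δ) * y) ^ (τ - p + 1) :=
      Real.rpow_le_rpow hx hxy (by linarith)
    have hxb2 : ((1/δ) * y) ^ (τ - p + 1) = δ ^ (p - 1 - τ) * y ^ (τ - p + 1) := by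
      rw [Real.mul_rpow (by positivity) hy0.le]
      congr 1
      rw [one_div, Real.inv_rpow hδ.le, ← Real.rpow_neg hδ.le]
      congr 1; ring
    have hysplit : y ^ (p - 1) * y ^ (τ - p + 1) = y ^ τ := by
      rw [← Real.rpow_add hy0, show p - 1 + (τ - p + 1) = τ by ring]
    have hp0 : (0:ℝ) < p := by linarith
    have hkey : p * (x + y) ^ (p - 1) * x ≤ C * x ^ (p - τ) * y ^ τ := by
      have hxpτ : 0 ≤ x ^ (p - τ) := Real.rpow_nonneg hx _
      have hyp1 : 0 ≤ y ^ (p - 1) := Real.rpow_nonneg hy _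
      have hc1 : 0 ≤ (1 + 1/δ) ^ (p-1) := (Real.rpow_pos_of_pos (by positivity) _).le
      have hxb' : x ^ (τ - p + 1) ≤ δ ^ (p - 1 - τ) * y ^ (τ - p + 1) := hxb2 ▸ hxb
      calc p * (x + y) ^ (p - 1) * x
          ≤ p * ((1 + 1/δ) ^ (p-1) * y ^ (p-1)) * x := by
            rw [← hb2]
            gcongr
        _ = p * (1 + 1/δ) ^ (p-1) * (y ^ (p-1) * (x ^ (p - τ) * x ^ (τ - p + 1))) := by
            rw [← hxsplit]; ring
        _ ≤ p * (1 + 1/δ) ^ (p-1) * (y ^ (p-1) * (x ^ (p - τ) * (δ ^ (p - 1 - τ) * y ^ (τ - p + 1)))) := by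
            gcongr
        _ = C * x ^ (p - τ) * y ^ τ := by
            rw [hCdef, ← hysplit]; ring
    have hkx : 0 ≤ k * x ^ p := by
      have := Real.rpow_nonneg hx p
      positivity
    linarith
end
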